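/- Riquier problem: for λ in the resolvent set of P_{X°} and boundary functions g_1,…,g_n: ∂X → ℂ, there exist unique functions f_n, f_{n−1}, …, f_1: X → ℂ with f_r = g_r on ∂X, (Δ_λ f_n)(x) = 0 for x ∈ X°, and (Δ_λ f_r)(x) = f_{r+1}(x) for x ∈ X° and r = n−1,…,1; the solution f = f_1 is given on X° by f(x) = Σ_{r=1}^n [G(λ)^r Q g_r](x), where G(λ) = (λ·I_{X°} − P_{X°})^{-1}. -/
import Mathlib


open Matrix

/-- The conditions of the Riquier problem: `f 0, …, f (n-1)` play the roles of
`f_1, …, f_n`; each `f r` has boundary values `g r`, the last one is λ-harmonic on `X°`,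
and `Δ_λ f_r = f_{r+1}` on `X°`. -/
def IsRiquierSolution {I B : Type*} [Fintype I] [Fintype B]
    (Δ : Matrix (I ⊕ B) (I ⊕ B) ℂ) (n : ℕ)
    (g : Fin n → B → ℂ) (f : Fin n → (I ⊕ B) → ℂ) : Prop :=
  (∀ (r : Fin n) (w : B), f r (Sum.inr w) = g r w) ∧
  (∀ (hn : 0 < n) (x : I), (Δ.mulVec (f ⟨n - 1, by omega⟩)) (Sum.inl x) = 0) ∧
  (∀ (r : ℕ) (hr : r + 1 < n) (x : I),
    (Δ.mulVec (f ⟨r, by omega⟩)) (Sum.inl x) = f ⟨r + 1, hr⟩ (Sum.inl x))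

/-- Auxiliary backward-recursive sequence: `wseq k` is the interior part of the
solution `f_{n-1-k}`. -/
private noncomputable def wseq {I B : Type*} [Fintype I] [Fintype B]
    (Ainv : Matrix I I ℂ) (Qm : Matrix I B ℂ) (gb : ℕ → B → ℂ) (n : ℕ) : ℕ → I → ℂ
  | 0 => Ainv.mulVec (Qm.mulVec (gb (n - 1)))
  | (k + 1) => Ainv.mulVec (wseq Ainv Qm gb n k + Qm.mulVec (gb (n - 1 - (k + 1))))

/-- Riquier problem: for `λ` in the resolvent set of `P_{X°}` and boundary functions
`g_1, …, g_n`, there is a unique tower of solutions `f_n, …, f_1`, and the solution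
`f = f_1` is given on `X°` by `f(x) = Σ_{r=1}^n [G(λ)^r Q g_r](x)` with
`G(λ) = (λI_{X°} - P_{X°})⁻¹`. -/
theorem riquier_problem
    {I B : Type*} [Fintype I] [Fintype B] [DecidableEq I] [DecidableEq B]
    [Nonempty I] [Nonempty B]
    (P : Matrix (I ⊕ B) (I ⊕ B) ℝ)
    (hnonneg : ∀ x y, 0 ≤ P x y)
    (hrow : ∀ x, ∑ y, P x y = 1)
    (habs : ∀ (w : B) (x : I ⊕ B), P (Sum.inr w) x = if x = Sum.inr w then 1 else 0)
    (lam : ℂ)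
    (hres : IsUnit
      (lam • (1 : Matrix I I ℂ) - (P.submatrix Sum.inl Sum.inl).map Complex.ofReal))
    (n : ℕ) (hn : 1 ≤ n) (g : Fin n → B → ℂ) :
    (∃! f : Fin n → (I ⊕ B) → ℂ,
      IsRiquierSolution
        (Matrix.fromBlocks
          (lam • (1 : Matrix I I ℂ) - (P.submatrix Sum.inl Sum.inl).map Complex.ofReal)
          (-(P.submatrix Sum.inl Sum.inr).map Complex.ofReal)
          (0 : Matrix B I ℂ) (0 : Matrix B B ℂ)) n g f) ∧
    (∀ f : Fin n → (I ⊕ B) → ℂ,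
      IsRiquierSolution
        (Matrix.fromBlocks
          (lam • (1 : Matrix I I ℂ) - (P.submatrix Sum.inl Sum.inl).map Complex.ofReal)
          (-(P.submatrix Sum.inl Sum.inr).map Complex.ofReal)
          (0 : Matrix B I ℂ) (0 : Matrix B B ℂ)) n g f →
      ∀ x : I, f ⟨0, by omega⟩ (Sum.inl x) =
        ∑ r : Fin n,
          ((((lam • (1 : Matrix I I ℂ) -
              (P.submatrix Sum.inl Sum.inl).map Complex.ofReal)⁻¹) ^ (r.1 + 1) *
            (P.submatrix Sum.inl Sum.inr).map Complex.ofReal).mulVec (g r)) x) := by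
  set A : Matrix I I ℂ :=
    lam • (1 : Matrix I I ℂ) - (P.submatrix Sum.inl Sum.inl).map Complex.ofReal with hA_def
  set Qm : Matrix I B ℂ := (P.submatrix Sum.inl Sum.inr).map Complex.ofReal with hQm_def
  have hAdet : IsUnit A.det := (Matrix.isUnit_iff_isUnit_det A).mp hres
  have hAinvA : A⁻¹ * A = 1 := Matrix.nonsing_inv_mul A hAdet
  have hAAinv : A * A⁻¹ = 1 := Matrix.mul_nonsing_inv A hAdet
  have hinj : ∀ u v : I → ℂ, A.mulVec u = A.mulVec v → u = v := by
    intro u v h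
    have h2 := congrArg (A⁻¹.mulVec) h
    simpa [Matrix.mulVec_mulVec, hAinvA] using h2
  -- block computation
  have hblock : ∀ (v : (I ⊕ B) → ℂ) (x : I),
      ((Matrix.fromBlocks A (-Qm) (0 : Matrix B I ℂ) (0 : Matrix B B ℂ)).mulVec v)
        (Sum.inl x)
        = A.mulVec (fun i => v (Sum.inl i)) x - Qm.mulVec (fun b => v (Sum.inr b)) x := by
    intro v x
    rw [Matrix.fromBlocks_mulVec]
    simp [Matrix.neg_mulVec, sub_eq_add_neg, Function.comp_def]
  set gb : ℕ → B → ℂ := fun r => if h : r < n then g ⟨r, h⟩ else 0 with hgb_def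
  have hgb : ∀ (r : ℕ) (h : r < n), gb r = g ⟨r, h⟩ := by
    intro r h; simp [hgb_def, h]
  set W : ℕ → I → ℂ := wseq A⁻¹ Qm gb n with hW_def
  have hAW0 : A.mulVec (W 0) = Qm.mulVec (gb (n - 1)) := by
    show A.mulVec (A⁻¹.mulVec _) = _
    rw [Matrix.mulVec_mulVec, hAAinv, Matrix.one_mulVec]
  have hAWs : ∀ k, A.mulVec (W (k + 1)) = W k + Qm.mulVec (gb (n - 1 - (k + 1))) := by
    intro k
    show A.mulVec (A⁻¹.mulVec _) = _
    rw [Matrix.mulVec_mulVec, hAAinv, Matrix.one_mulVec]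
  -- the explicit solution
  set F : Fin n → (I ⊕ B) → ℂ := fun r => Sum.elim (W (n - 1 - r.1)) (g r) with hF_def
  have hFsol : IsRiquierSolution
      (Matrix.fromBlocks A (-Qm) (0 : Matrix B I ℂ) (0 : Matrix B B ℂ)) n g F := by
    refine ⟨fun r w => rfl, ?_, ?_⟩
    · intro hn0 x
      rw [hblock]
      have h1 : (fun i => F ⟨n - 1, by omega⟩ (Sum.inl i)) = W 0 := by
        funext i
        simp only [hF_def, Sum.elim_inl]
        congr 1
        omega
      have h2 : (fun b => F ⟨n - 1, by omega⟩ (Sum.inr b)) = gb (n - 1) := by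
        funext b
        simp [hF_def, hgb (n - 1) (by omega)]
      rw [h1, h2, hAW0]
      ring
    · intro r hr x
      rw [hblock]
      have h1 : (fun i => F ⟨r, by omega⟩ (Sum.inl i)) = W ((n - 1 - (r + 1)) + 1) := by
        funext i
        simp only [hF_def, Sum.elim_inl]
        congr 1
        omega
      have h2 : (fun b => F ⟨r, by omega⟩ (Sum.inr b)) = gb (n - 1 - ((n - 1 - (r + 1)) + 1)) := by
        have hnat : n - 1 - ((n - 1 - (r + 1)) + 1) = r := by omega
        funext b
        simp only [hF_def, Sum.elim_inr, hnat, hgb r (by omega)]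
      rw [h1, h2, hAWs]
      simp [hF_def]
  -- uniqueness
  have huniq : ∀ f : Fin n → (I ⊕ B) → ℂ,
      IsRiquierSolution
        (Matrix.fromBlocks A (-Qm) (0 : Matrix B I ℂ) (0 : Matrix B B ℂ)) n g f →
      f = F := by
    intro f hf
    obtain ⟨hb, hlast, hrec⟩ := hf
    have hΔ : ∀ (r : Fin n) (x : I),
        ((Matrix.fromBlocks A (-Qm) (0 : Matrix B I ℂ) (0 : Matrix B B ℂ)).mulVec (f r))
          (Sum.inl x)
          = A.mulVec (fun i => f r (Sum.inl i)) x - Qm.mulVec (g r) x := by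
      intro r x
      rw [hblock]
      congr 2
      funext b
      exact hb r b
    have main : ∀ k, k < n → (fun x => f ⟨n - 1 - k, by omega⟩ (Sum.inl x)) = W k := by
      intro k
      induction k with
      | zero =>
        intro hk
        apply hinj
        rw [hAW0]
        funext x
        simp only [Nat.sub_zero]
        have h := hlast (by omega) x
        rw [hΔ ⟨n - 1, by omega⟩ x] at h
        rw [hgb (n - 1) (by omega)]
        linear_combination h
      | succ k ih =>
        intro hk
        have hk' : k < n := by omega
        apply hinj
        rw [hAWs k, ← ih hk']
        funext x
        have hr1 : (n - 1 - (k + 1)) + 1 < n := by omega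
        have h := hrec (n - 1 - (k + 1)) hr1 x
        rw [hΔ ⟨n - 1 - (k + 1), by omega⟩ x] at h
        have hfin : (⟨(n - 1 - (k + 1)) + 1, hr1⟩ : Fin n) = ⟨n - 1 - k, by omega⟩ := by
          apply Fin.ext; simp; omega
        rw [hfin] at h
        rw [hgb _ (show n - 1 - (k + 1) < n by omega)]
        simp only [Pi.add_apply]
        linear_combination h
    funext r
    funext z
    cases z with
    | inl x =>
      have h1 := congrFun (main (n - 1 - r.1) (by omega)) x
      have hfin : (⟨n - 1 - (n - 1 - r.1), by omega⟩ : Fin n) = r := by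
        apply Fin.ext; simp; omega
      rw [hfin] at h1
      simpa [hF_def] using h1
    | inr w =>
      simp [hF_def, hb r w]
  -- formula for W as a sum
  have hWsum : ∀ k, k < n →
      W k = ∑ j ∈ Finset.range (k + 1),
        ((A⁻¹) ^ (j + 1) * Qm).mulVec (gb (n - 1 - k + j)) := by
    intro k
    induction k with
    | zero =>
      intro _
      have e1 : (A⁻¹ : Matrix I I ℂ) ^ (0 + 1) = A⁻¹ := by rw [zero_add, pow_one]
      rw [Finset.sum_range_one, Nat.sub_zero, Nat.add_zero, e1, ← Matrix.mulVec_mulVec]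
      rfl
    | succ k ih =>
      intro hk
      have hk' : k < n := by omega
      show A⁻¹.mulVec (W k + Qm.mulVec (gb (n - 1 - (k + 1)))) = _
      rw [Matrix.mulVec_add, ih hk']
      conv_rhs => rw [Finset.sum_range_succ']
      congr 1
      · -- the shifted terms
        rw [show A⁻¹.mulVec (∑ j ∈ Finset.range (k + 1),
              ((A⁻¹) ^ (j + 1) * Qm).mulVec (gb (n - 1 - k + j)))
            = ∑ j ∈ Finset.range (k + 1),
              A⁻¹.mulVec (((A⁻¹) ^ (j + 1) * Qm).mulVec (gb (n - 1 - k + j))) from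
          map_sum (Matrix.mulVecLin A⁻¹) _ _]
        refine Finset.sum_congr rfl fun j hj => ?_
        have hpow : A⁻¹ * (A⁻¹ ^ (j + 1) * Qm) = A⁻¹ ^ (j + 1 + 1) * Qm := by
          rw [← Matrix.mul_assoc, ← pow_succ']
        have hidx : n - 1 - k + j = n - 1 - (k + 1) + (j + 1) := by omega
        rw [Matrix.mulVec_mulVec, hpow, hidx]
      · show A⁻¹.mulVec (Qm.mulVec (gb (n - 1 - (k + 1))))
            = (A⁻¹ ^ 1 * Qm).mulVec (gb (n - 1 - (k + 1)))
        rw [pow_one, ← Matrix.mulVec_mulVec]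
  -- final formula for F at 0
  have hF0 : ∀ x : I, F ⟨0, by omega⟩ (Sum.inl x)
      = ∑ r : Fin n, (((A⁻¹) ^ (r.1 + 1) * Qm).mulVec (g r)) x := by
    intro x
    have h1 : F ⟨0, by omega⟩ (Sum.inl x) = W (n - 1) x := by simp [hF_def]
    rw [h1, hWsum (n - 1) (by omega)]
    rw [show (∑ j ∈ Finset.range ((n - 1) + 1),
          ((A⁻¹) ^ (j + 1) * Qm).mulVec (gb (n - 1 - (n - 1) + j))) x
        = ∑ j ∈ Finset.range ((n - 1) + 1),
          (((A⁻¹) ^ (j + 1) * Qm).mulVec (gb (n - 1 - (n - 1) + j))) x from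
      Finset.sum_apply x _ _]
    have hrange : (n - 1) + 1 = n := by omega
    rw [hrange, ← Fin.sum_univ_eq_sum_range
      (fun j => (((A⁻¹) ^ (j + 1) * Qm).mulVec (gb (n - 1 - (n - 1) + j))) x) n]
    refine Finset.sum_congr rfl fun r _ => ?_
    have : n - 1 - (n - 1) + r.1 = r.1 := by omega
    rw [this, hgb r.1 r.2]
  constructor
  · exact ⟨F, hFsol, huniq⟩
  · intro f hf x
    rw [huniq f hf]
    exact hF0 x
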